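/- arXiv:1611.08640 — 4 statements merged into one kernel-verified Lean document; each statement's English description precedes it below -/
import Mathlib

section
/- Let B be an n×m real matrix with linearly independent columns, let Π_B = B(BᵀB)⁻¹Bᵀ be the orthogonal projection onto the column space of B, and let x ∈ ℝⁿ. Then xᵀ(I_n − Π_B)x = det([x B]ᵀ[x B]) / det(BᵀB), where [x B] is the n×(m+1) matrix obtained by adjoining x as a first column to B. -/
open Matrix

lemma gram_posDef {n m : ℕ} (B : Matrix (Fin n) (Fin m) ℝ)
    (hB : LinearIndependent ℝ fun l : Fin m => (fun i => B i l)) :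
    (Bᵀ * B).PosDef := by
  rw [posDef_iff_dotProduct_mulVec]
  constructor
  · have := Matrix.isHermitian_conjTranspose_mul_self B
    simpa using this
  · intro y hy
    have hBy : B *ᵥ y ≠ 0 := by
      intro h
      apply hy
      refine Fintype.linearIndependent_iff.mp hB y ?_ |> funext
      · funext i
        have := congrFun h i
        simpa [Matrix.mulVec, dotProduct, mul_comm] using this
    have : 0 < (B *ᵥ y) ⬝ᵥ (B *ᵥ y) := by
      have h1 : 0 ≤ (B *ᵥ y) ⬝ᵥ (B *ᵥ y) :=
        Finset.sum_nonneg fun i _ => mul_self_nonneg _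
      rcases h1.lt_or_eq with h | h
      · exact h
      · exfalso
        apply hBy
        funext i
        have := (Finset.sum_eq_zero_iff_of_nonneg
          (fun i _ => mul_self_nonneg ((B *ᵥ y) i))).mp h.symm i (Finset.mem_univ i)
        exact (mul_self_eq_zero).mp this
    calc (0:ℝ) < (B *ᵥ y) ⬝ᵥ (B *ᵥ y) := this
    _ = dotProduct (star y) ((Bᵀ * B) *ᵥ y) := by
        simp [star, ← Matrix.mulVec_mulVec, Matrix.dotProduct_mulVec,
          Matrix.vecMul_transpose]

/-- If `B` is an `n × m` real matrix with linearly independent columns,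
`Π_B = B(BᵀB)⁻¹Bᵀ` the projection onto its column space, and `x ∈ ℝⁿ`, then
`xᵀ(I - Π_B)x = det([x B]ᵀ[x B]) / det(BᵀB)`, where `[x B]` is `B` with `x`
adjoined as a first column. -/
theorem resid_quadratic_eq_det_ratio
    (n m : ℕ) (B : Matrix (Fin n) (Fin m) ℝ)
    (hB : LinearIndependent ℝ fun l : Fin m => (fun i => B i l))
    (x : Fin n → ℝ) :
    x ⬝ᵥ ((1 - B * (Bᵀ * B)⁻¹ * Bᵀ) *ᵥ x) =
      ((Matrix.of fun i => Fin.cons (x i) (B i) : Matrix (Fin n) (Fin (m + 1)) ℝ)ᵀ *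
          (Matrix.of fun i => Fin.cons (x i) (B i) : Matrix (Fin n) (Fin (m + 1)) ℝ)).det /
        (Bᵀ * B).det := by
  classical
  set G := Bᵀ * B with hGdef
  have hG : G.PosDef := gram_posDef B hB
  have hdet : G.det ≠ 0 := ne_of_gt hG.det_pos
  obtain ⟨invG⟩ := hG.isUnit.nonempty_invertible
  set A : Matrix (Fin n) (Fin (m+1)) ℝ := Matrix.of fun i => Fin.cons (x i) (B i) with hA
  -- block pieces
  set b : Matrix (Fin m) Unit ℝ := Matrix.of fun j _ => (Bᵀ *ᵥ x) j with hb
  set c : Matrix Unit (Fin m) ℝ := Matrix.of fun _ j => (x ᵥ* B) j with hc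
  set a : Matrix Unit Unit ℝ := Matrix.of fun _ _ => x ⬝ᵥ x with ha
  let e : Fin (m+1) ≃ (Fin m ⊕ Unit) :=
    (finSuccEquiv m).trans (Equiv.optionEquivSumPUnit (Fin m))
  have hsub : Aᵀ * A = (Matrix.fromBlocks G b c a).submatrix e e := by
    ext k l
    refine Fin.cases ?_ (fun k => ?_) k <;> refine Fin.cases ?_ (fun l => ?_) l <;>
      simp [e, A, Matrix.mul_apply, Matrix.mulVec, Matrix.vecMul,
        dotProduct, G, b, c, a, mul_comm]
  have hdetA : (Aᵀ * A).det = G.det * (a - c * ⅟G * b).det := by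
    rw [hsub, Matrix.det_submatrix_equiv_self, Matrix.det_fromBlocks₁₁]
  have hinv : ⅟G = G⁻¹ := invOf_eq_nonsing_inv G
  have hquad : (a - c * ⅟G * b).det = x ⬝ᵥ ((1 - B * G⁻¹ * Bᵀ) *ᵥ x) := by
    rw [Matrix.det_unique, hinv]
    simp only [Matrix.sub_apply, a, Matrix.of_apply, Matrix.sub_mulVec,
      dotProduct_sub, Matrix.one_mulVec]
    congr 1
    have h1 : x ⬝ᵥ ((B * G⁻¹ * Bᵀ) *ᵥ x) = ((x ᵥ* B) ᵥ* G⁻¹) ⬝ᵥ (Bᵀ *ᵥ x) := by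
      simp only [Matrix.dotProduct_mulVec, Matrix.vecMul_vecMul]
    rw [h1]
    simp [Matrix.mul_apply, Matrix.vecMul, dotProduct, b, c,
      Finset.sum_mul, Finset.mul_sum]
  rw [hdetA, hquad, mul_comm, mul_div_assoc, div_self hdet, mul_one]
end

section
/- Let B = [b₁ … b_m] be an n×m real matrix whose Gram matrix BᵀB has smallest eigenvalue at least α > 0, let x ∈ ℝⁿ with ‖x‖₂ = 1, and let z ∈ ℝⁿ satisfy |xᵀz| ≤ π and |b_lᵀz| ≤ π for every column l = 1, …, m. Then |xᵀ(I_n − Π_B)z| ≤ π + √m · π / √α, where Π_B = B(BᵀB)⁻¹Bᵀ is the orthogonal projection onto the column space of B. -/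
open Matrix

private lemma dp_self_nonneg {m : ℕ} (v : Fin m → ℝ) : 0 ≤ v ⬝ᵥ v :=
  Finset.sum_nonneg fun _ _ => mul_self_nonneg _

/-- Cauchy–Schwarz for a symmetric positive-semidefinite bilinear form given by a matrix. -/
private lemma cs_psd {m : ℕ} (M : Matrix (Fin m) (Fin m) ℝ) (hsym : Mᵀ = M)
    (hpsd : ∀ v : Fin m → ℝ, 0 ≤ v ⬝ᵥ (M *ᵥ v)) (u w : Fin m → ℝ) :
    (u ⬝ᵥ (M *ᵥ w)) ^ 2 ≤ (u ⬝ᵥ (M *ᵥ u)) * (w ⬝ᵥ (M *ᵥ w)) := by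
  have hflip : ∀ a b : Fin m → ℝ, (M *ᵥ a) ⬝ᵥ b = a ⬝ᵥ (M *ᵥ b) := by
    intro a b
    rw [dotProduct_comm, dotProduct_mulVec, ← mulVec_transpose, hsym, dotProduct_comm]
  have key : ∀ t : ℝ, 0 ≤ (u ⬝ᵥ (M *ᵥ u)) * (t * t) + (2 * (u ⬝ᵥ (M *ᵥ w))) * t
      + (w ⬝ᵥ (M *ᵥ w)) := by
    intro t
    have h := hpsd (t • u + w)
    have expand : (t • u + w) ⬝ᵥ (M *ᵥ (t • u + w)) = (u ⬝ᵥ (M *ᵥ u)) * (t * t)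
        + (2 * (u ⬝ᵥ (M *ᵥ w))) * t + (w ⬝ᵥ (M *ᵥ w)) := by
      rw [mulVec_add, mulVec_smul, dotProduct_add, add_dotProduct, add_dotProduct,
        smul_dotProduct, smul_dotProduct, dotProduct_smul, dotProduct_smul]
      have hwMu : w ⬝ᵥ (M *ᵥ u) = u ⬝ᵥ (M *ᵥ w) := by
        rw [← hflip u w, dotProduct_comm]
      rw [hwMu]
      simp only [smul_eq_mul]
      ring
    rw [expand] at h; exact h
  have hdisc := discrim_le_zero key
  rw [discrim] at hdisc
  nlinarith [hdisc]

/-- If the Gram matrix `BᵀB` of `B = [b₁ … b_m]` has smallest eigenvalue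
at least `α > 0`, `x ∈ ℝⁿ` is a unit vector, and `z ∈ ℝⁿ` satisfies `|xᵀz| ≤ π` and
`|b_lᵀ z| ≤ π` for every column `l`, then `|xᵀ(I - Π_B)z| ≤ π + √m ⬝ π / √α`,
where `Π_B = B(BᵀB)⁻¹Bᵀ`. -/
theorem abs_tilted_inner_le
    (n m : ℕ) (B : Matrix (Fin n) (Fin m) ℝ)
    (α : ℝ) (hα : 0 < α)
    (heig : ∀ v : Fin m → ℝ, α * (v ⬝ᵥ v) ≤ v ⬝ᵥ ((Bᵀ * B) *ᵥ v))
    (x : Fin n → ℝ) (hx : ∑ i, x i ^ 2 = 1)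
    (z : Fin n → ℝ) (piv : ℝ)
    (hxz : |x ⬝ᵥ z| ≤ piv)
    (hz : ∀ l : Fin m, |(fun i => B i l) ⬝ᵥ z| ≤ piv) :
    |x ⬝ᵥ ((1 - B * (Bᵀ * B)⁻¹ * Bᵀ) *ᵥ z)| ≤ piv + Real.sqrt m * piv / Real.sqrt α := by
  have hpiv : 0 ≤ piv := le_trans (abs_nonneg _) hxz
  set G := Bᵀ * B with hGdef
  have hG_sym : Gᵀ = G := by simp [hGdef, transpose_mul, Matrix.mul_assoc]
  have hG_pd : G.PosDef := by
    refine Matrix.PosDef.of_dotProduct_mulVec_pos ?_ ?_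
    · rw [IsHermitian, conjTranspose_eq_transpose_of_trivial, hG_sym]
    · intro v hv
      rw [star_trivial]
      have h1 := heig v
      have h2 : 0 < v ⬝ᵥ v := by
        rcases lt_or_eq_of_le (dp_self_nonneg v) with h | h
        · exact h
        · exact absurd (dotProduct_self_eq_zero.mp h.symm) hv
      nlinarith
  have hdet : IsUnit G.det := isUnit_iff_ne_zero.mpr (ne_of_gt hG_pd.det_pos)
  have hinv1 : G⁻¹ * G = 1 := nonsing_inv_mul G hdet
  have hinv2 : G * G⁻¹ = 1 := mul_nonsing_inv G hdet
  have hGinv_sym : (G⁻¹)ᵀ = G⁻¹ := by rw [transpose_nonsing_inv, hG_sym]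
  have hflip : ∀ {k k' : ℕ} (A : Matrix (Fin k) (Fin k') ℝ) (a : Fin k → ℝ) (b : Fin k' → ℝ),
      (Aᵀ *ᵥ a) ⬝ᵥ b = a ⬝ᵥ (A *ᵥ b) := by
    intro k k' A a b
    rw [dotProduct_comm, dotProduct_mulVec, ← mulVec_transpose, transpose_transpose,
      dotProduct_comm]
  have hGflip : ∀ a b : Fin m → ℝ, (G *ᵥ a) ⬝ᵥ b = a ⬝ᵥ (G *ᵥ b) := by
    intro a b
    conv_lhs => rw [← hG_sym]
    rw [hflip]
  have hGinv_psd : ∀ v : Fin m → ℝ, 0 ≤ v ⬝ᵥ (G⁻¹ *ᵥ v) := by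
    intro v
    set t := G⁻¹ *ᵥ v with ht
    have hvt : v = G *ᵥ t := by rw [ht, mulVec_mulVec, hinv2, one_mulVec]
    calc (0:ℝ) ≤ α * (t ⬝ᵥ t) := mul_nonneg hα.le (dp_self_nonneg t)
      _ ≤ t ⬝ᵥ (G *ᵥ t) := heig t
      _ = v ⬝ᵥ t := by rw [hvt, hGflip]
  set P := B * G⁻¹ * Bᵀ with hP
  set u := Bᵀ *ᵥ x with hu
  set w := Bᵀ *ᵥ z with hw
  have hPz : ∀ y : Fin n → ℝ, x ⬝ᵥ (P *ᵥ y) = u ⬝ᵥ (G⁻¹ *ᵥ (Bᵀ *ᵥ y)) := by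
    intro y
    rw [hP, Matrix.mul_assoc, ← mulVec_mulVec, ← hflip B x, mulVec_mulVec]
  have hxx : x ⬝ᵥ x = 1 := by
    rw [dotProduct, ← hx]; exact Finset.sum_congr rfl fun i _ => (sq (x i)).symm
  have hPsym : Pᵀ = P := by
    rw [hP, transpose_mul, transpose_mul, transpose_transpose, hGinv_sym, Matrix.mul_assoc]
  have hPP : P * P = P := by
    calc P * P = B * (G⁻¹ * (G * (G⁻¹ * Bᵀ))) := by
          rw [hP, hGdef]; simp only [Matrix.mul_assoc]
      _ = B * (G⁻¹ * Bᵀ) := by rw [← Matrix.mul_assoc G⁻¹ G, hinv1, Matrix.one_mul]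
      _ = P := by rw [hP, Matrix.mul_assoc]
  have hproj : u ⬝ᵥ (G⁻¹ *ᵥ u) ≤ 1 := by
    have hpx : x ⬝ᵥ (P *ᵥ x) = u ⬝ᵥ (G⁻¹ *ᵥ u) := hPz x
    have hPxPx : (P *ᵥ x) ⬝ᵥ (P *ᵥ x) = x ⬝ᵥ (P *ᵥ x) := by
      have h := hflip P x (P *ᵥ x)
      rw [hPsym, mulVec_mulVec, hPP] at h
      exact h
    have hc : (P *ᵥ x) ⬝ᵥ x = x ⬝ᵥ (P *ᵥ x) := dotProduct_comm _ _
    have h0 : 0 ≤ (x - P *ᵥ x) ⬝ᵥ (x - P *ᵥ x) :=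
      Finset.sum_nonneg fun _ _ => mul_self_nonneg _
    rw [sub_dotProduct, dotProduct_sub, dotProduct_sub, hPxPx, hc, hxx] at h0
    rw [← hpx]; linarith
  have hwbound : w ⬝ᵥ (G⁻¹ *ᵥ w) ≤ (w ⬝ᵥ w) / α := by
    set t := G⁻¹ *ᵥ w with ht
    have hvt : w = G *ᵥ t := by rw [ht, mulVec_mulVec, hinv2, one_mulVec]
    have hq : w ⬝ᵥ t = t ⬝ᵥ (G *ᵥ t) := by rw [hvt, hGflip]
    have hqa : α * (t ⬝ᵥ t) ≤ t ⬝ᵥ (G *ᵥ t) := heig t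
    have hcs : (t ⬝ᵥ w) ^ 2 ≤ (t ⬝ᵥ t) * (w ⬝ᵥ w) := by
      have h := Finset.sum_mul_sq_le_sq_mul_sq Finset.univ t w
      simpa [dotProduct, sq] using h
    have htw : t ⬝ᵥ w = t ⬝ᵥ (G *ᵥ t) := by rw [dotProduct_comm, hq]
    have htt : 0 ≤ t ⬝ᵥ t := dp_self_nonneg t
    have hww : 0 ≤ w ⬝ᵥ w := dp_self_nonneg w
    rw [htw] at hcs
    have hq0 : 0 ≤ t ⬝ᵥ (G *ᵥ t) := le_trans (mul_nonneg hα.le htt) hqa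
    have hA : α * (t ⬝ᵥ (G *ᵥ t)) ^ 2 ≤ α * ((t ⬝ᵥ t) * (w ⬝ᵥ w)) :=
      mul_le_mul_of_nonneg_left hcs hα.le
    have hB : (α * (t ⬝ᵥ t)) * (w ⬝ᵥ w) ≤ (t ⬝ᵥ (G *ᵥ t)) * (w ⬝ᵥ w) :=
      mul_le_mul_of_nonneg_right hqa hww
    have hgoal : α * (t ⬝ᵥ (G *ᵥ t)) ≤ w ⬝ᵥ w := by
      rcases eq_or_lt_of_le hq0 with h | h
      · rw [← h]; simpa using hww
      · rw [← mul_le_mul_iff_left₀ h]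
        nlinarith
    rw [hq, le_div_iff₀ hα]
    nlinarith [hgoal]
  have hww_bound : w ⬝ᵥ w ≤ m * piv ^ 2 := by
    have hl : ∀ l, w l * w l ≤ piv ^ 2 := by
      intro l
      have hwl : w l = (fun i => B i l) ⬝ᵥ z := by
        simp [hw, mulVec, dotProduct, transpose_apply]
      have h := hz l
      rw [← hwl] at h
      have := abs_le.mp h
      nlinarith
    calc w ⬝ᵥ w = ∑ l, w l * w l := rfl
      _ ≤ ∑ _l : Fin m, piv ^ 2 := Finset.sum_le_sum fun l _ => hl l
      _ = m * piv ^ 2 := by simp [Finset.sum_const, mul_comm]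
  have hcs : (u ⬝ᵥ (G⁻¹ *ᵥ w)) ^ 2 ≤ (u ⬝ᵥ (G⁻¹ *ᵥ u)) * (w ⬝ᵥ (G⁻¹ *ᵥ w)) :=
    cs_psd G⁻¹ hGinv_sym hGinv_psd u w
  have hmid : |u ⬝ᵥ (G⁻¹ *ᵥ w)| ≤ Real.sqrt m * piv / Real.sqrt α := by
    have hwG0 : 0 ≤ w ⬝ᵥ (G⁻¹ *ᵥ w) := hGinv_psd w
    have h1 : (u ⬝ᵥ (G⁻¹ *ᵥ w)) ^ 2 ≤ (m * piv ^ 2) / α := by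
      calc (u ⬝ᵥ (G⁻¹ *ᵥ w)) ^ 2 ≤ (u ⬝ᵥ (G⁻¹ *ᵥ u)) * (w ⬝ᵥ (G⁻¹ *ᵥ w)) := hcs
        _ ≤ 1 * (w ⬝ᵥ (G⁻¹ *ᵥ w)) := mul_le_mul_of_nonneg_right hproj hwG0
        _ = w ⬝ᵥ (G⁻¹ *ᵥ w) := one_mul _
        _ ≤ (w ⬝ᵥ w) / α := hwbound
        _ ≤ (m * piv ^ 2) / α := by gcongr
    have h2 : |u ⬝ᵥ (G⁻¹ *ᵥ w)| ≤ Real.sqrt ((m * piv ^ 2) / α) := by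
      rw [← Real.sqrt_sq_eq_abs]
      exact Real.sqrt_le_sqrt h1
    have h3 : Real.sqrt ((m * piv ^ 2) / α) = Real.sqrt m * piv / Real.sqrt α := by
      rw [Real.sqrt_div (by positivity), Real.sqrt_mul (by positivity), Real.sqrt_sq hpiv]
    rw [← h3]; exact h2
  have hsplit : x ⬝ᵥ ((1 - P) *ᵥ z) = x ⬝ᵥ z - u ⬝ᵥ (G⁻¹ *ᵥ w) := by
    rw [sub_mulVec, one_mulVec, dotProduct_sub, hPz z, hw]
  rw [hsplit]
  calc |x ⬝ᵥ z - u ⬝ᵥ (G⁻¹ *ᵥ w)| ≤ |x ⬝ᵥ z| + |u ⬝ᵥ (G⁻¹ *ᵥ w)| := abs_sub _ _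
    _ ≤ piv + Real.sqrt m * piv / Real.sqrt α := add_le_add hxz hmid
end

section
/- Let B be an n×m real matrix and x ∈ ℝⁿ with ‖x‖₂ = 1, such that M = [x B] has linearly independent columns and the smallest eigenvalue of MᵀM is at least τ > 0. Then 1 − xᵀΠ_B x ≥ τ, where Π_B = B(BᵀB)⁻¹Bᵀ is the orthogonal projection onto the column space of B; more precisely, with θ = (BᵀB)⁻¹Bᵀx one has 1 − xᵀΠ_B x = ‖x − Bθ‖₂² ≥ (1 + ‖θ‖₂²)·τ ≥ τ. -/
open Matrix

/-- Let `x` be a unit vector and `B` an `n × m` matrix such that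
`M = [x B]` has linearly independent columns and the smallest eigenvalue of `MᵀM`
is at least `τ > 0`.  Then, with `θ = (BᵀB)⁻¹Bᵀx` and `Π_B = B(BᵀB)⁻¹Bᵀ`:
`1 - xᵀΠ_B x = ‖x - Bθ‖₂² ≥ (1 + ‖θ‖₂²)τ ≥ τ`, in particular `1 - xᵀΠ_B x ≥ τ`. -/
theorem one_sub_proj_quadratic_ge
    (n m : ℕ) (B : Matrix (Fin n) (Fin m) ℝ)
    (x : Fin n → ℝ) (hx : ∑ i, x i ^ 2 = 1)
    (M : Matrix (Fin n) (Fin (m + 1)) ℝ)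
    (hM : M = Matrix.of fun i => Fin.cons (x i) (B i))
    (hind : LinearIndependent ℝ fun k : Fin (m + 1) => (fun i => M i k))
    (τ : ℝ) (hτ : 0 < τ)
    (heig : ∀ v : Fin (m + 1) → ℝ, τ * (v ⬝ᵥ v) ≤ v ⬝ᵥ ((Mᵀ * M) *ᵥ v))
    (θ : Fin m → ℝ) (hθ : θ = (Bᵀ * B)⁻¹ *ᵥ (Bᵀ *ᵥ x)) :
    1 - x ⬝ᵥ ((B * (Bᵀ * B)⁻¹ * Bᵀ) *ᵥ x) = ∑ i, (x i - (B *ᵥ θ) i) ^ 2 ∧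
    (1 + ∑ l, θ l ^ 2) * τ ≤ ∑ i, (x i - (B *ᵥ θ) i) ^ 2 ∧
    τ ≤ 1 - x ⬝ᵥ ((B * (Bᵀ * B)⁻¹ * Bᵀ) *ᵥ x) := by
  -- quadratic form identities
  have hquad : ∀ v : Fin (m + 1) → ℝ, v ⬝ᵥ ((Mᵀ * M) *ᵥ v) = (M *ᵥ v) ⬝ᵥ (M *ᵥ v) := by
    intro v
    rw [← mulVec_mulVec, dotProduct_mulVec, vecMul_transpose]
  have hgram : ∀ w : Fin m → ℝ, w ⬝ᵥ ((Bᵀ * B) *ᵥ w) = (B *ᵥ w) ⬝ᵥ (B *ᵥ w) := by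
    intro w
    rw [← mulVec_mulVec, dotProduct_mulVec, vecMul_transpose]
  -- B applied via M on cons 0
  have hB0 : ∀ w : Fin m → ℝ, M *ᵥ (Fin.cons 0 w) = B *ᵥ w := by
    intro w
    funext i
    simp [hM, mulVec, dotProduct, Fin.sum_univ_succ]
  -- positive definiteness of BᵀB
  have hPD : (Bᵀ * B).PosDef := by
    refine Matrix.PosDef.of_dotProduct_mulVec_pos (by simpa using isHermitian_conjTranspose_mul_self B) fun w hw => ?_
    have h := heig (Fin.cons 0 w)
    rw [hquad, hB0] at h
    have hww : (0:ℝ) < w ⬝ᵥ w := by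
      have hne : w ⬝ᵥ w ≠ 0 := fun h0 => hw ((dotProduct_self_eq_zero).mp h0)
      have hnn : 0 ≤ w ⬝ᵥ w := Finset.sum_nonneg fun i _ => mul_self_nonneg _
      exact lt_of_le_of_ne hnn (Ne.symm hne)
    have hcc : (Fin.cons 0 w : Fin (m+1) → ℝ) ⬝ᵥ (Fin.cons 0 w) = w ⬝ᵥ w := by
      simp [dotProduct, Fin.sum_univ_succ]
    rw [hcc] at h
    have hpos : (0:ℝ) < (B *ᵥ w) ⬝ᵥ (B *ᵥ w) := lt_of_lt_of_le (mul_pos hτ hww) h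
    simpa [star, hgram w] using hpos
  have hdet : IsUnit (Bᵀ * B).det := hPD.det_pos.ne'.isUnit
  -- BᵀB θ = Bᵀ x
  have hkey : (Bᵀ * B) *ᵥ θ = Bᵀ *ᵥ x := by
    rw [hθ, mulVec_mulVec, Matrix.mul_nonsing_inv _ hdet, one_mulVec]
  -- projection applied to x is B θ
  have hproj : (B * (Bᵀ * B)⁻¹ * Bᵀ) *ᵥ x = B *ᵥ θ := by
    rw [hθ, ← mulVec_mulVec, ← mulVec_mulVec]
  -- x ⬝ Bθ = Bθ ⬝ Bθ
  have hxy : x ⬝ᵥ (B *ᵥ θ) = (B *ᵥ θ) ⬝ᵥ (B *ᵥ θ) := by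
    rw [← hgram θ, hkey, dotProduct_mulVec, mulVec_transpose, dotProduct_comm]
  -- expansion of the square norm
  have hexp : ∑ i, (x i - (B *ᵥ θ) i) ^ 2
      = (∑ i, x i ^ 2) - 2 * (x ⬝ᵥ (B *ᵥ θ)) + (B *ᵥ θ) ⬝ᵥ (B *ᵥ θ) := by
    simp only [dotProduct, Finset.mul_sum, ← Finset.sum_sub_distrib, ← Finset.sum_add_distrib]
    apply Finset.sum_congr rfl
    intros
    ring
  have heq : 1 - x ⬝ᵥ ((B * (Bᵀ * B)⁻¹ * Bᵀ) *ᵥ x) = ∑ i, (x i - (B *ᵥ θ) i) ^ 2 := by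
    rw [hproj, hexp, hx, ← hxy]
    ring
  have h2 : (1 + ∑ l, θ l ^ 2) * τ ≤ ∑ i, (x i - (B *ᵥ θ) i) ^ 2 := by
    have h := heig (Fin.cons 1 (fun l => -θ l))
    have hMv : M *ᵥ (Fin.cons 1 (fun l => -θ l)) = fun i => x i - (B *ᵥ θ) i := by
      funext i
      simp [hM, mulVec, dotProduct, Fin.sum_univ_succ, sub_eq_add_neg]
    rw [hquad, hMv] at h
    have hvv : (Fin.cons 1 (fun l => -θ l) : Fin (m+1) → ℝ) ⬝ᵥ (Fin.cons 1 (fun l => -θ l))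
        = 1 + ∑ l, θ l ^ 2 := by
      simp [dotProduct, Fin.sum_univ_succ, sq]
    rw [hvv] at h
    calc (1 + ∑ l, θ l ^ 2) * τ = τ * (1 + ∑ l, θ l ^ 2) := by ring
    _ ≤ _ := h
    _ = ∑ i, (x i - (B *ᵥ θ) i) ^ 2 := by simp [dotProduct, sq]
  refine ⟨heq, h2, ?_⟩
  rw [heq]
  have hθnn : 0 ≤ ∑ l, θ l ^ 2 := Finset.sum_nonneg fun l _ => sq_nonneg _
  nlinarith [h2]
end

section
/- Let A be an n×s real matrix and B an n×m real matrix such that the n×(s+m) matrix M = [A B] has linearly independent columns and the smallest eigenvalue of MᵀM is at least τ > 0. Then for every β ∈ ℝˢ, ‖(I_n − Π_B)Aβ‖₂² ≥ τ‖β‖₂², where Π_B = B(BᵀB)⁻¹Bᵀ is the orthogonal projection onto the column space of B. -/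
open Matrix

/-- Let `A` be `n × s`, `B` be `n × m`, and suppose the concatenated
matrix `M = [A B]` has linearly independent columns with smallest eigenvalue of `MᵀM`
at least `τ > 0`.  Then for every `β ∈ ℝˢ`,
`‖(I - Π_B) A β‖₂² ≥ τ ‖β‖₂²`, where `Π_B = B(BᵀB)⁻¹Bᵀ`. -/
theorem resid_norm_sq_ge_of_eigen_bound
    (n s m : ℕ) (A : Matrix (Fin n) (Fin s) ℝ) (B : Matrix (Fin n) (Fin m) ℝ)
    (M : Matrix (Fin n) (Fin s ⊕ Fin m) ℝ)
    (hM : M = Matrix.fromCols A B)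
    (hind : LinearIndependent ℝ fun k : Fin s ⊕ Fin m => (fun i => M i k))
    (τ : ℝ) (hτ : 0 < τ)
    (heig : ∀ v : Fin s ⊕ Fin m → ℝ, τ * (v ⬝ᵥ v) ≤ v ⬝ᵥ ((Mᵀ * M) *ᵥ v)) :
    ∀ β : Fin s → ℝ,
      τ * ∑ l, β l ^ 2 ≤ ∑ i, ((1 - B * (Bᵀ * B)⁻¹ * Bᵀ) *ᵥ (A *ᵥ β)) i ^ 2 := by
  intro β
  set γ : Fin m → ℝ := -(((Bᵀ * B)⁻¹ * Bᵀ) *ᵥ (A *ᵥ β)) with hγ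
  set v : Fin s ⊕ Fin m → ℝ := Sum.elim β γ with hv
  have hMv : M *ᵥ v = (1 - B * (Bᵀ * B)⁻¹ * Bᵀ) *ᵥ (A *ᵥ β) := by
    rw [hM, hv, fromCols_mulVec_sumElim, hγ, sub_mulVec, one_mulVec,
      mulVec_neg, mulVec_mulVec, Matrix.mul_assoc]
    ring_nf
  have key := heig v
  have hquad : v ⬝ᵥ ((Mᵀ * M) *ᵥ v) = (M *ᵥ v) ⬝ᵥ (M *ᵥ v) := by
    rw [← mulVec_mulVec, dotProduct_mulVec, vecMul_transpose]
  have hvv : β ⬝ᵥ β ≤ v ⬝ᵥ v := by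
    have : v ⬝ᵥ v = β ⬝ᵥ β + γ ⬝ᵥ γ := by
      simp [hv, dotProduct, Fintype.sum_sum_type]
    rw [this]
    exact le_add_of_nonneg_right (Finset.sum_nonneg fun i _ => mul_self_nonneg _)
  calc τ * ∑ l, β l ^ 2 = τ * (β ⬝ᵥ β) := by simp [dotProduct, sq]
    _ ≤ τ * (v ⬝ᵥ v) := by nlinarith
    _ ≤ (M *ᵥ v) ⬝ᵥ (M *ᵥ v) := hquad ▸ key
    _ = ∑ i, ((1 - B * (Bᵀ * B)⁻¹ * Bᵀ) *ᵥ (A *ᵥ β)) i ^ 2 := by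
        rw [hMv]; simp [dotProduct, sq]
end
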